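/- Suppose f : ℝ → ℝ is continuous and there exists μ > p > 1 such that for all t ≠ 0, 0 < F(t) ≤ (1/μ) t f(t), where F(t) = ∫₀ᵗ f(s) ds. Then there exist constants C₁ > 0 and C₂ ≥ 0 such that F(t) ≥ C₁|t|^μ − C₂ for all t ∈ ℝ. -/

import Mathlib

open intervalIntegral

lemma aux_growth (G g : ℝ → ℝ) (μ : ℝ) (hμ0 : 0 < μ)
    (hG : ∀ s, 1 ≤ s → HasDerivAt G (g s) s)
    (hAR : ∀ s, 1 ≤ s → μ * G s ≤ s * g s) :
    ∀ t, 1 ≤ t → G 1 * t ^ μ ≤ G t := by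
  intro t ht
  set φ : ℝ → ℝ := fun s => G s * s ^ (-μ) with hφ
  have key : ∀ x, 1 ≤ x → HasDerivAt φ (x ^ (-μ - 1) * (x * g x - μ * G x)) x := by
    intro x hx
    have hx0 : (0:ℝ) < x := lt_of_lt_of_le one_pos hx
    have h1 : HasDerivAt (fun s : ℝ => s ^ (-μ)) (-μ * x ^ (-μ - 1)) x :=
      Real.hasDerivAt_rpow_const (Or.inl hx0.ne')
    have h2 := (hG x hx).mul h1
    refine HasDerivAt.congr_deriv h2 ?_
    have hsplit : x * x ^ (-μ - 1) = x ^ (-μ) := by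
      rw [show x * x ^ (-μ - 1) = x ^ (1:ℝ) * x ^ (-μ - 1) by rw [Real.rpow_one],
        ← Real.rpow_add hx0]
      norm_num
    rw [← hsplit]; ring
  have mono : MonotoneOn φ (Set.Ici (1:ℝ)) := by
    apply monotoneOn_of_deriv_nonneg (convex_Ici 1)
    · intro x hx
      exact (key x hx).continuousAt.continuousWithinAt
    · intro x hx
      rw [interior_Ici] at hx
      exact (key x hx.le).differentiableAt.differentiableWithinAt
    · intro x hx
      rw [interior_Ici] at hx
      have hx1 : (1:ℝ) ≤ x := hx.le
      have hx0 : (0:ℝ) < x := lt_of_lt_of_le one_pos hx1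
      rw [(key x hx1).deriv]
      exact mul_nonneg (Real.rpow_nonneg hx0.le _) (sub_nonneg.2 (hAR x hx1))
  have h1le : φ 1 ≤ φ t := mono (Set.mem_Ici.2 le_rfl) (Set.mem_Ici.2 ht) ht
  have hφ1 : φ 1 = G 1 := by simp [hφ]
  rw [hφ1] at h1le
  have ht0 : (0:ℝ) < t := lt_of_lt_of_le one_pos ht
  calc G 1 * t ^ μ ≤ (G t * t ^ (-μ)) * t ^ μ :=
        mul_le_mul_of_nonneg_right h1le (Real.rpow_nonneg ht0.le _)
    _ = G t := by
        rw [mul_assoc, ← Real.rpow_add ht0]; simp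

/-- Ambrosetti–Rabinowitz: if `f` is continuous and `0 < F(t) ≤ (1/μ) t f(t)`
for all `t ≠ 0` with `μ > p > 1`, where `F(t) = ∫₀ᵗ f`, then
`F(t) ≥ C₁|t|^μ - C₂` for some `C₁ > 0`, `C₂ ≥ 0`. -/
theorem stmt7 (f : ℝ → ℝ) (p μ : ℝ) (hf : Continuous f)
    (hp : 1 < p) (hμ : p < μ)
    (hAR : ∀ t : ℝ, t ≠ 0 →
      (0 < ∫ s in (0:ℝ)..t, f s) ∧
      (∫ s in (0:ℝ)..t, f s) ≤ (1 / μ) * t * f t) :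
    ∃ C₁ : ℝ, 0 < C₁ ∧ ∃ C₂ : ℝ, 0 ≤ C₂ ∧ ∀ t : ℝ,
      C₁ * |t| ^ μ - C₂ ≤ ∫ s in (0:ℝ)..t, f s := by
  set F : ℝ → ℝ := fun t => ∫ s in (0:ℝ)..t, f s with hFdef
  have hμ0 : (0:ℝ) < μ := lt_trans one_pos (lt_trans hp hμ)
  have hF : ∀ t : ℝ, HasDerivAt F (f t) t := by
    intro t
    exact intervalIntegral.integral_hasDerivAt_right (hf.intervalIntegrable 0 t)
      hf.stronglyMeasurable.stronglyMeasurableAtFilter hf.continuousAt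
  have hARμ : ∀ t : ℝ, t ≠ 0 → μ * F t ≤ t * f t := by
    intro t ht
    have h := (hAR t ht).2
    have := mul_le_mul_of_nonneg_left h hμ0.le
    calc μ * F t ≤ μ * ((1 / μ) * t * f t) := this
      _ = t * f t := by field_simp
  have hpos : ∀ t, 1 ≤ t → F 1 * t ^ μ ≤ F t :=
    aux_growth F f μ hμ0 (fun s _ => hF s)
      (fun s hs => hARμ s (by positivity))
  have hneg : ∀ t, 1 ≤ t → F (-1) * t ^ μ ≤ F (-t) := by
    apply aux_growth (fun s => F (-s)) (fun s => -f (-s)) μ hμ0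
    · intro s _
      have h := (hF (-s)).comp s (hasDerivAt_neg s)
      have h' : HasDerivAt (F ∘ Neg.neg) (-f (-s)) s := by simpa [mul_comm] using h
      exact h'
    · intro s hs
      have hs0 : (0:ℝ) < s := lt_of_lt_of_le one_pos hs
      have h := hARμ (-s) (by simp [hs0.ne'])
      nlinarith [h]
  have hFnn : ∀ t : ℝ, 0 ≤ F t := by
    intro t
    rcases eq_or_ne t 0 with h | h
    · simp [hFdef, h]
    · exact (hAR t h).1.le
  have hF1 : 0 < F 1 := (hAR 1 one_ne_zero).1
  have hFm1 : 0 < F (-1) := (hAR (-1) (by norm_num)).1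
  refine ⟨min (F 1) (F (-1)), lt_min hF1 hFm1, min (F 1) (F (-1)),
    (lt_min hF1 hFm1).le, fun t => ?_⟩
  set C₁ := min (F 1) (F (-1)) with hC₁
  have hC₁pos : 0 < C₁ := lt_min hF1 hFm1
  rcases le_or_gt 1 t with h1 | h1
  · have habs : |t| = t := abs_of_nonneg (by linarith)
    have : C₁ * t ^ μ ≤ F 1 * t ^ μ :=
      mul_le_mul_of_nonneg_right (min_le_left _ _)
        (Real.rpow_nonneg (by linarith) _)
    have h2 := hpos t h1
    rw [habs]; linarith
  rcases le_or_gt t (-1) with h2 | h2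
  · have habs : |t| = -t := abs_of_nonpos (by linarith)
    have h1t : (1:ℝ) ≤ -t := by linarith
    have : C₁ * (-t) ^ μ ≤ F (-1) * (-t) ^ μ :=
      mul_le_mul_of_nonneg_right (min_le_right _ _)
        (Real.rpow_nonneg (by linarith) _)
    have h3 := hneg (-t) h1t
    rw [neg_neg] at h3
    rw [habs]; linarith
  · have habs1 : |t| ≤ 1 := abs_le.2 ⟨h2.le, h1.le⟩
    have hle : |t| ^ μ ≤ 1 := Real.rpow_le_one (abs_nonneg t) habs1 hμ0.le
    have : C₁ * |t| ^ μ ≤ C₁ := by nlinarith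
    have := hFnn t
    linarith
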